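/- If for all weights β ∈ ℝⁿ with ∑βⱼ = 0 the number of k-subsets e of [n] with ∑_{j∈e}βⱼ ≥ 0 is at least C(n−1,k−1), then for all weights β' ∈ ℝ^{n+k} with ∑β'ⱼ = 0 the number of k-subsets e of [n+k] with ∑_{j∈e}β'ⱼ ≥ 0 is at least C(n+k−1,k−1). -/

import Mathlib

theorem stmt16 (n k : ℕ) (hk : 1 ≤ k) (hkn : k ≤ n)
    (h : ∀ β : Fin n → ℝ, ∑ j, β j = 0 →
      (n - 1).choose (k - 1) ≤
        ((Finset.powersetCard k (Finset.univ : Finset (Fin n))).filter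
          (fun e => 0 ≤ ∑ j ∈ e, β j)).card) :
    ∀ β' : Fin (n + k) → ℝ, ∑ j, β' j = 0 →
      (n + k - 1).choose (k - 1) ≤
        ((Finset.powersetCard k (Finset.univ : Finset (Fin (n + k)))).filter
          (fun e => 0 ≤ ∑ j ∈ e, β' j)).card := by
  classical
  intro β' hβ'
  set K : Finset (Finset (Fin (n + k))) :=
    Finset.powersetCard k (Finset.univ : Finset (Fin (n + k))) with hKdef
  set Pos : Finset (Finset (Fin (n + k))) :=
    K.filter (fun e => 0 ≤ ∑ j ∈ e, β' j) with hPosdef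
  set Neg : Finset (Finset (Fin (n + k))) :=
    K.filter (fun e => ¬ 0 ≤ ∑ j ∈ e, β' j) with hNegdef
  have hn0 : 0 < n := lt_of_lt_of_le hk hkn
  have hKcard : K.card = (n + k).choose k := by
    simp [hKdef, Finset.card_powersetCard]
  have hsplit : Pos.card + Neg.card = (n + k).choose k := by
    rw [← hKcard, hPosdef, hNegdef]
    exact Finset.card_filter_add_card_filter_not _
  -- Key claim: each negative k-set admits ≥ C(n-1,k-1) nonnegative k-sets disjoint from it
  have key : ∀ A ∈ Neg, (n - 1).choose (k - 1) ≤
      (Pos.filter (fun e => Disjoint A e)).card := by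
    intro A hA
    rw [hNegdef, Finset.mem_filter] at hA
    obtain ⟨hAK, hAneg⟩ := hA
    have hAcard : A.card = k := Finset.mem_powersetCard_univ.mp hAK
    have hcomp : Aᶜ.card = n := by
      rw [Finset.card_compl, hAcard]
      simp
    -- sum over the complement
    set S : ℝ := ∑ x ∈ Aᶜ, β' x with hSdef
    have hSpos : 0 ≤ S := by
      have := Finset.sum_add_sum_compl A β'
      rw [hβ'] at this
      push_neg at hAneg
      linarith [hAneg]
    -- an equiv from Fin n to the complement
    set E : Fin n ≃ {x // x ∈ Aᶜ} := ((Aᶜ.equivFin).trans (finCongr hcomp)).symm with hEdef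
    set ι : Fin n → Fin (n + k) := fun j => (E j : Fin (n + k)) with hιdef
    have hι_inj : Function.Injective ι := fun a b hab => E.injective (Subtype.ext hab)
    have hι_mem : ∀ j, ι j ∈ Aᶜ := fun j => (E j).2
    have hsumι : ∑ j : Fin n, β' (ι j) = S := by
      rw [hSdef, ← Finset.sum_coe_sort Aᶜ β']
      exact E.sum_comp (fun x : {x // x ∈ Aᶜ} => β' (x : Fin (n + k)))
    set β : Fin n → ℝ := fun j => β' (ι j) - S / n with hβdef
    have hβ0 : ∑ j, β j = 0 := by
      rw [hβdef]
      rw [Finset.sum_sub_distrib, hsumι, Finset.sum_const, Finset.card_univ,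
        Fintype.card_fin, nsmul_eq_mul]
      have : (n : ℝ) ≠ 0 := Nat.cast_ne_zero.mpr (by omega)
      field_simp
      ring
    have hF := h β hβ0
    refine le_trans hF (Finset.card_le_card_of_injOn (fun e₀ => e₀.image ι) ?_ ?_)
    · intro e₀ he₀
      rw [Finset.mem_coe, Finset.mem_filter] at he₀
      obtain ⟨he₀K, he₀sum⟩ := he₀
      have he₀card : e₀.card = k := Finset.mem_powersetCard_univ.mp he₀K
      have himgcard : (e₀.image ι).card = k := by
        rw [Finset.card_image_of_injective _ hι_inj, he₀card]
      have himgsub : e₀.image ι ⊆ Aᶜ := by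
        intro x hx
        obtain ⟨j, _, rfl⟩ := Finset.mem_image.mp hx
        exact hι_mem j
      have hdisj : Disjoint A (e₀.image ι) := by
        rw [Finset.disjoint_left]
        intro a ha hmem
        exact (Finset.mem_compl.mp (himgsub hmem)) ha
      have hsum' : 0 ≤ ∑ x ∈ e₀.image ι, β' x := by
        rw [Finset.sum_image (fun a _ b _ hab => hι_inj hab)]
        have : ∑ j ∈ e₀, β' (ι j) = (∑ j ∈ e₀, β j) + e₀.card * (S / n) := by
          rw [hβdef]
          rw [Finset.sum_sub_distrib, Finset.sum_const, nsmul_eq_mul]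
          ring
        rw [this, he₀card]
        have h1 : 0 ≤ (k : ℝ) * (S / n) := by positivity
        linarith
      rw [Finset.mem_coe, Finset.mem_filter, Finset.mem_filter]
      exact ⟨⟨Finset.mem_powersetCard_univ.mpr himgcard, hsum'⟩, hdisj⟩
    · exact (Finset.image_injective hι_inj).injOn
  -- upper bound: each nonnegative set is disjoint from at most C(n,k) sets
  have upper : ∀ e ∈ Pos, (Neg.filter (fun A => Disjoint A e)).card ≤ n.choose k := by
    intro e he
    rw [hPosdef, Finset.mem_filter] at he
    have hecard : e.card = k := Finset.mem_powersetCard_univ.mp he.1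
    have hcompe : eᶜ.card = n := by
      rw [Finset.card_compl, hecard]; simp
    have hsub : Neg.filter (fun A => Disjoint A e) ⊆ Finset.powersetCard k eᶜ := by
      intro A hA
      rw [Finset.mem_filter, hNegdef, Finset.mem_filter] at hA
      obtain ⟨⟨hAK, _⟩, hdisj⟩ := hA
      rw [Finset.mem_powersetCard]
      refine ⟨?_, Finset.mem_powersetCard_univ.mp hAK⟩
      intro x hx
      rw [Finset.mem_compl]
      exact Finset.disjoint_left.mp hdisj hx
    calc (Neg.filter (fun A => Disjoint A e)).card
        ≤ (Finset.powersetCard k eᶜ).card := Finset.card_le_card hsub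
      _ = n.choose k := by rw [Finset.card_powersetCard, hcompe]
  -- double counting
  have main : Neg.card * (n - 1).choose (k - 1) ≤ Pos.card * n.choose k := by
    calc Neg.card * (n - 1).choose (k - 1)
        = ∑ _A ∈ Neg, (n - 1).choose (k - 1) := by
          rw [Finset.sum_const, smul_eq_mul]
      _ ≤ ∑ A ∈ Neg, (Pos.filter (fun e => Disjoint A e)).card :=
          Finset.sum_le_sum key
      _ = ∑ A ∈ Neg, ∑ e ∈ Pos, (if Disjoint A e then 1 else 0) := by
          refine Finset.sum_congr rfl (fun A _ => ?_)
          rw [Finset.card_filter]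
      _ = ∑ e ∈ Pos, ∑ A ∈ Neg, (if Disjoint A e then 1 else 0) := Finset.sum_comm
      _ = ∑ e ∈ Pos, (Neg.filter (fun A => Disjoint A e)).card := by
          refine Finset.sum_congr rfl (fun e _ => ?_)
          rw [Finset.card_filter]
      _ ≤ ∑ _e ∈ Pos, n.choose k := Finset.sum_le_sum upper
      _ = Pos.card * n.choose k := by rw [Finset.sum_const, smul_eq_mul]
  -- arithmetic with binomial identities
  set a := (n - 1).choose (k - 1) with hadef
  set b := n.choose k with hbdef
  set c := (n + k - 1).choose (k - 1) with hcdef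
  set M := (n + k).choose k with hMdef
  have id1 : n * a = b * k := by
    have := Nat.add_one_mul_choose_eq (n - 1) (k - 1)
    rwa [(by omega : n - 1 + 1 = n), (by omega : k - 1 + 1 = k)] at this
  have id2 : (n + k) * c = M * k := by
    have := Nat.add_one_mul_choose_eq (n + k - 1) (k - 1)
    rwa [(by omega : n + k - 1 + 1 = n + k), (by omega : k - 1 + 1 = k)] at this
  have ha_pos : 0 < a := Nat.choose_pos (by omega)
  have h1 : M * a ≤ Pos.card * (a + b) := by
    calc M * a = Pos.card * a + Neg.card * a := by rw [← hsplit]; ring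
      _ ≤ Pos.card * a + Pos.card * b := by
          exact Nat.add_le_add_left (le_trans main (le_refl _)) _
      _ = Pos.card * (a + b) := by ring
  have h2 : k * (a + b) = (n + k) * a := by
    calc k * (a + b) = k * a + b * k := by ring
      _ = k * a + n * a := by rw [← id1]
      _ = (n + k) * a := by ring
  have h3 : ((n + k) * c) * a ≤ ((n + k) * Pos.card) * a := by
    calc ((n + k) * c) * a = k * (M * a) := by rw [id2]; ring
      _ ≤ k * (Pos.card * (a + b)) := Nat.mul_le_mul_left _ h1
      _ = Pos.card * (k * (a + b)) := by ring
      _ = Pos.card * ((n + k) * a) := by rw [h2]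
      _ = ((n + k) * Pos.card) * a := by ring
  have h4 : (n + k) * c ≤ (n + k) * Pos.card := Nat.le_of_mul_le_mul_right h3 ha_pos
  exact Nat.le_of_mul_le_mul_left h4 (by omega)
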